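/- Let (X,G) be a graph with uniformly bounded degrees and 𝒞 a cutset of G with uniformly bounded boundaries that is closed under complementation. Then there exist finitely many cutsets 𝒞₀, …, 𝒞ₙ with 𝒞 = 𝒞₀ ∪ ⋯ ∪ 𝒞ₙ such that each 𝒞ᵢ is nested, closed under complementation, has uniformly bounded boundaries, and is finitely separating on each E_G-class (i.e., for every E_G-class ω, {C ∈ 𝒞ᵢ : C ⊆ ω} is a treeset on ω). -/

import Mathlib

open Set

/-- A *walk* of length `n` in the (directed presentation of the) edge set `E`. -/
def IsWalk {α : Type*} (E : Set (α × α)) (f : ℕ → α) (n : ℕ) : Prop :=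
  ∀ i < n, (f i, f (i + 1)) ∈ E

/-- Two points are joined by an `E`-path. -/
def Reach {α : Type*} (E : Set (α × α)) (x y : α) : Prop :=
  ∃ (n : ℕ) (f : ℕ → α), f 0 = x ∧ f n = y ∧ IsWalk E f n

/-- The extended path metric `d_E` of a graph, with values in `ℕ∞` (`∞` if no path exists). -/
noncomputable def graphDist {α : Type*} (E : Set (α × α)) (x y : α) : ℕ∞ :=
  sInf {d : ℕ∞ | ∃ (n : ℕ) (f : ℕ → α), d = (n : ℕ∞) ∧ f 0 = x ∧ f n = y ∧ IsWalk E f n}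

/-- A graph is *acyclic* if it has no injective cycle (of length at least 3,
i.e. not doubling back along a single edge). -/
def Acyclic {α : Type*} (E : Set (α × α)) : Prop :=
  ¬ ∃ (f : ℕ → α) (n : ℕ), 3 ≤ n ∧ IsWalk E f n ∧ f n = f 0 ∧
      ∀ i j, i < n → j < n → f i = f j → i = j

/-- `E` is (the directed presentation of) a graph: symmetric and irreflexive. -/
def IsGraph {α : Type*} (E : Set (α × α)) : Prop :=
  (∀ p ∈ E, (p.2, p.1) ∈ E) ∧ ∀ x : α, (x, x) ∉ E

/-- `(α, E)` has uniformly bounded degrees. -/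
def BddDeg {α : Type*} (E : Set (α × α)) : Prop :=
  ∃ d : ℕ, ∀ x : α, {y | (x, y) ∈ E}.encard ≤ (d : ℕ∞)

/-- The `E_G`-class (connected component) of `x`. -/
def cls {α : Type*} (E : Set (α × α)) (x : α) : Set α := {y | Reach E x y}

/-- The complement `C̄ = ω ∖ C` of `C` inside the `E_G`-class(es) of its points. -/
def cCompl {α : Type*} (E : Set (α × α)) (C : Set α) : Set α :=
  {y | y ∉ C ∧ ∃ x ∈ C, Reach E x y}

/-- Inner vertex boundary `∂iv C` of a subset `C` of an `E_G`-class. -/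
def innerB {α : Type*} (E : Set (α × α)) (C : Set α) : Set α :=
  {x | x ∈ C ∧ ∃ y, y ∉ C ∧ (x, y) ∈ E}

/-- Outer vertex boundary `∂ov C = ∂iv C̄` of a subset `C` of an `E_G`-class. -/
def outerB {α : Type*} (E : Set (α × α)) (C : Set α) : Set α :=
  {y | y ∉ C ∧ ∃ x ∈ C, (y, x) ∈ E}

/-- Outer edge boundary `∂oe C = (C × C̄) ∩ E` of a subset `C` of an `E_G`-class. -/
def outerEdgeB {α : Type*} (E : Set (α × α)) (C : Set α) : Set (α × α) :=
  {p | p ∈ E ∧ p.1 ∈ C ∧ p.2 ∉ C}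

/-- A *cut* of a graph: a nonempty proper subset of an `E_G`-class with finite
edge boundary. -/
def IsCut {α : Type*} (E : Set (α × α)) (C : Set α) : Prop :=
  (∃ x₀, x₀ ∈ C ∧ C ⊆ cls E x₀ ∧ C ≠ cls E x₀) ∧ (outerEdgeB E C).Finite

/-- `diam_E(A)`, with values in `ℕ∞`. -/
noncomputable def gdiam {α : Type*} (E : Set (α × α)) (A : Set α) : ℕ∞ :=
  ⨆ x ∈ A, ⨆ y ∈ A, graphDist E x y

/-- `C` and `D` lie on the same `E_G`-class. -/
def SameClass {α : Type*} (E : Set (α × α)) (C D : Set α) : Prop :=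
  ∃ x ∈ C, ∃ y ∈ D, Reach E x y

/-- `C` and `D` are *nested* with each other (complements taken within the class). -/
def NestedPair {α : Type*} (E : Set (α × α)) (C D : Set α) : Prop :=
  C ∩ D = ∅ ∨ C ∩ cCompl E D = ∅ ∨ cCompl E C ∩ D = ∅ ∨ cCompl E C ∩ cCompl E D = ∅
/-- A *treeset on a set* `ω`: a family of nonempty proper subsets of `ω` that is nested,
closed under complementation within `ω`, and finitely separating. -/
def IsTreesetOn {α : Type*} (ω : Set α) (𝒟 : Set (Set α)) : Prop :=
  (∀ C ∈ 𝒟, C ⊆ ω ∧ C.Nonempty ∧ C ≠ ω) ∧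
  (∀ C ∈ 𝒟, ∀ D ∈ 𝒟,
      C ∩ D = ∅ ∨ C ∩ (ω \ D) = ∅ ∨ (ω \ C) ∩ D = ∅ ∨ (ω \ C) ∩ (ω \ D) = ∅) ∧
  (∀ C ∈ 𝒟, ω \ C ∈ 𝒟) ∧
  (∀ x ∈ ω, ∀ y ∈ ω, {C | C ∈ 𝒟 ∧ x ∈ C ∧ y ∉ C}.Finite)
namespace CutsetAux

variable {X : Type*} {G : Set (X × X)}

/-- A walk of length exactly `n` from `x` to `y`. -/
def WalkN (G : Set (X × X)) (x y : X) (n : ℕ) : Prop :=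
  ∃ f : ℕ → X, f 0 = x ∧ f n = y ∧ IsWalk G f n

lemma walkN_refl (x : X) : WalkN G x x 0 :=
  ⟨fun _ => x, rfl, rfl, fun i h => absurd h (Nat.not_lt_zero i)⟩

lemma reach_iff {x y : X} : Reach G x y ↔ ∃ n, WalkN G x y n := Iff.rfl

lemma WalkN.reach {x y : X} {n : ℕ} (h : WalkN G x y n) : Reach G x y := ⟨n, h⟩

lemma WalkN.trans {x y z : X} {m n : ℕ} (h1 : WalkN G x y m) (h2 : WalkN G y z n) :
    WalkN G x z (m + n) := by
  obtain ⟨f, hf0, hfm, hf⟩ := h1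
  obtain ⟨g, hg0, hgn, hg⟩ := h2
  refine ⟨fun i => if i < m then f i else g (i - m), ?_, ?_, ?_⟩
  · by_cases h : 0 < m
    · simpa [h] using hf0
    · have hm : m = 0 := by omega
      subst hm
      simpa using hg0.trans (hfm.symm.trans hf0)
  · have : ¬ m + n < m := by omega
    simp only [this, if_false]
    simpa using hgn
  · intro i hi
    by_cases h1 : i + 1 < m
    · have h2 : i < m := by omega
      simpa [h1, h2] using hf i h2
    · by_cases h2 : i < m
      · have he : i + 1 = m := by omega
        have : g (i + 1 - m) = f (i + 1) := by
          rw [he]; simpa using hg0.trans hfm.symm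
        have h0 : g 0 = f (i + 1) := by rw [he]; exact hg0.trans hfm.symm
        simpa [h1, h2, this, h0] using hf i h2
      · have h3 : i - m < n := by omega
        have h4 : i + 1 - m = (i - m) + 1 := by omega
        simpa [h1, h2, h4] using hg (i - m) h3

lemma WalkN.symm (hsym : ∀ p ∈ G, (p.2, p.1) ∈ G) {x y : X} {n : ℕ}
    (h : WalkN G x y n) : WalkN G y x n := by
  obtain ⟨f, hf0, hfn, hf⟩ := h
  refine ⟨fun i => f (n - i), by simpa using hfn, by simpa using hf0, ?_⟩
  intro i hi
  have h1 : n - i - 1 < n := by omega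
  have h2 : n - i - 1 + 1 = n - i := by omega
  have h3 : n - (i + 1) = n - i - 1 := by omega
  have := hsym _ (hf (n - i - 1) h1)
  simp only [h3]
  rw [h2] at this
  exact this

lemma reach_refl (x : X) : Reach G x x := ⟨0, walkN_refl x⟩

lemma reach_trans {x y z : X} (h1 : Reach G x y) (h2 : Reach G y z) : Reach G x z := by
  obtain ⟨m, h1⟩ := h1; obtain ⟨n, h2⟩ := h2; exact ⟨m + n, WalkN.trans h1 h2⟩

lemma reach_symm (hsym : ∀ p ∈ G, (p.2, p.1) ∈ G) {x y : X} (h : Reach G x y) :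
    Reach G y x := by
  obtain ⟨n, h⟩ := h; exact ⟨n, WalkN.symm hsym h⟩

lemma reach_of_edge {x y : X} (h : (x, y) ∈ G) : Reach G x y :=
  ⟨1, fun i => if i = 0 then x else y, by simp, by simp, by intro i hi; interval_cases i; simpa⟩

/-- Every vertex of a walk is reachable from the start. -/
lemma reach_of_walk_vertex {f : ℕ → X} {n : ℕ} (hw : IsWalk G f n) (hf0 : f 0 = x)
    {i : ℕ} (hi : i ≤ n) : Reach G x (f i) :=
  ⟨i, f, hf0, rfl, fun j hj => hw j (lt_of_lt_of_le hj hi)⟩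

/-- A walk from inside `A` to outside `A` crosses the boundary. -/
lemma exists_cross {A : Set X} {f : ℕ → X} {n : ℕ} (hw : IsWalk G f n)
    (h0 : f 0 ∈ A) (hn : f n ∉ A) : ∃ i < n, f i ∈ A ∧ f (i + 1) ∉ A := by
  induction n with
  | zero => exact absurd h0 hn
  | succ n ih =>
    by_cases h : f n ∈ A
    · exact ⟨n, Nat.lt_succ_self n, h, hn⟩
    · obtain ⟨i, hi, h1, h2⟩ := ih (fun i hi => hw i (hi.trans (Nat.lt_succ_self n))) h
      exact ⟨i, hi.trans (Nat.lt_succ_self n), h1, h2⟩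

/-- First hit of a walk into a target set. -/
lemma exists_firstHit {T : Set X} (f : ℕ → X) (n : ℕ) (hn : f n ∈ T) :
    ∃ i ≤ n, f i ∈ T ∧ ∀ j < i, f j ∉ T := by
  classical
  have hex : ∃ i, f i ∈ T := ⟨n, hn⟩
  exact ⟨Nat.find hex, Nat.find_le hn, Nat.find_spec hex, fun j hj => Nat.find_min hex hj⟩

/-- Membership in `C` is constant along a walk avoiding a set `T` containing both boundaries. -/
lemma mem_iff_of_walk_avoid {C T : Set X}
    (hin : innerB G C ⊆ T) (hout : outerB G C ⊆ T) {f : ℕ → X} {n : ℕ}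
    (hw : IsWalk G f n) {i : ℕ} (hi : i ≤ n) (havoid : ∀ j < i, f j ∉ T) :
    (f 0 ∈ C ↔ f i ∈ C) := by
  induction i with
  | zero => exact Iff.rfl
  | succ i ih =>
    have hstep : (f i ∈ C ↔ f (i + 1) ∈ C) := by
      constructor
      · intro h1
        by_contra h2
        exact havoid i (Nat.lt_succ_self i) (hin ⟨h1, f (i + 1), h2, hw i (by omega)⟩)
      · intro h1
        by_contra h2
        exact havoid i (Nat.lt_succ_self i) (hout ⟨h2, f (i + 1), h1, hw i (by omega)⟩)
    exact (ih (by omega) (fun j hj => havoid j (by omega))).trans hstep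

end CutsetAux
namespace CutsetAux

variable {X : Type*} {G : Set (X × X)}

/-- `ω` is an `E_G`-class. -/
def IsClass (G : Set (X × X)) (ω : Set X) : Prop := ∃ x, ω = cls G x

lemma mem_cls_self (x : X) : x ∈ cls G x := reach_refl x

lemma cls_eq_of_reach (hsym : ∀ p ∈ G, (p.2, p.1) ∈ G) {x y : X} (h : Reach G x y) :
    cls G x = cls G y := by
  ext z
  exact ⟨fun hz => reach_trans (reach_symm hsym h) hz, fun hz => reach_trans h hz⟩

lemma cls_eq_of_mem (hsym : ∀ p ∈ G, (p.2, p.1) ∈ G) {ω : Set X} (hω : IsClass G ω)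
    {x : X} (hx : x ∈ ω) : cls G x = ω := by
  obtain ⟨x₀, rfl⟩ := hω
  exact (cls_eq_of_reach hsym hx).symm

lemma class_conn (hsym : ∀ p ∈ G, (p.2, p.1) ∈ G) {ω : Set X} (hω : IsClass G ω)
    {x y : X} (hx : x ∈ ω) (hy : y ∈ ω) : Reach G x y := by
  rw [← cls_eq_of_mem hsym hω hx] at hy; exact hy

lemma class_closed {ω : Set X} (hω : IsClass G ω) {x y : X} (hx : x ∈ ω)
    (h : Reach G x y) : y ∈ ω := by
  obtain ⟨x₀, rfl⟩ := hω
  exact reach_trans hx h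

lemma class_closed_edge {ω : Set X} (hω : IsClass G ω) {x y : X} (hx : x ∈ ω)
    (h : (x, y) ∈ G) : y ∈ ω := class_closed hω hx (reach_of_edge h)

/-- Combinatorial ball of radius `m` around `x`. -/
def ballC (G : Set (X × X)) (x : X) (m : ℕ) : Set X := {y | ∃ k ≤ m, WalkN G x y k}

lemma self_mem_ballC (x : X) (m : ℕ) : x ∈ ballC G x m := ⟨0, Nat.zero_le m, walkN_refl x⟩

lemma ballC_mono {x : X} {m m' : ℕ} (h : m ≤ m') : ballC G x m ⊆ ballC G x m' :=
  fun _ ⟨k, hk, hw⟩ => ⟨k, hk.trans h, hw⟩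

lemma mem_ballC_of_walk {x y : X} {k m : ℕ} (hk : k ≤ m) (h : WalkN G x y k) :
    y ∈ ballC G x m := ⟨k, hk, h⟩

lemma ballC_step {x y z : X} {m : ℕ} (hy : y ∈ ballC G x m) (h : (y, z) ∈ G) :
    z ∈ ballC G x (m + 1) := by
  obtain ⟨k, hk, hw⟩ := hy
  have : WalkN G y z 1 :=
    ⟨fun i => if i = 0 then y else z, by simp, by simp, by intro i hi; interval_cases i; simpa⟩
  exact ⟨k + 1, by omega, hw.trans this⟩

lemma encard_biUnion_le {α β : Type*} {s : Set α} (hs : s.Finite) (g : α → Set β) {k : ℕ∞}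
    (h : ∀ a, (g a).encard ≤ k) : (⋃ a ∈ s, g a).encard ≤ s.encard * k := by
  induction s, hs using Set.Finite.induction_on with
  | empty => simp
  | @insert a s ha hs ih =>
    have h1 : (⋃ b ∈ insert a s, g b) = g a ∪ ⋃ b ∈ s, g b := by
      simp [Set.biUnion_insert]
    rw [h1]
    calc (g a ∪ ⋃ b ∈ s, g b).encard ≤ (g a).encard + (⋃ b ∈ s, g b).encard :=
          Set.encard_union_le _ _
      _ ≤ k + s.encard * k := add_le_add (h a) ih
      _ = (s.encard + 1) * k := by rw [add_mul, one_mul, add_comm]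
      _ = (insert a s).encard * k := by rw [Set.encard_insert_of_notMem ha]

lemma ballC_encard {d : ℕ} (hdeg : ∀ x : X, {y | (x, y) ∈ G}.encard ≤ (d : ℕ∞)) (x : X)
    (m : ℕ) : (ballC G x m).encard ≤ (((d + 1) ^ (m + 1) : ℕ) : ℕ∞) := by
  induction m with
  | zero =>
    have : ballC G x 0 ⊆ {x} := by
      rintro y ⟨k, hk, f, hf0, hfk, -⟩
      interval_cases k
      simp [← hf0, ← hfk]
    calc (ballC G x 0).encard ≤ ({x} : Set X).encard := Set.encard_le_encard this
      _ = 1 := Set.encard_singleton x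
      _ ≤ _ := by
        rw [← Nat.cast_one, Nat.cast_le]
        exact Nat.one_le_pow _ _ (by omega)
  | succ m ih =>
    have hsub : ballC G x (m + 1) ⊆ ⋃ y ∈ ballC G x m, insert y {z | (y, z) ∈ G} := by
      rintro z ⟨k, hk, hw⟩
      rcases Nat.lt_or_ge k (m + 1) with h | h
      · exact Set.mem_biUnion (⟨k, by omega, hw⟩ : z ∈ ballC G x m) (Set.mem_insert _ _)
      · have hk1 : k = m + 1 := by omega
        subst hk1
        obtain ⟨f, hf0, hfk, hwk⟩ := hw
        refine Set.mem_biUnion (⟨m, le_rfl, f, hf0, rfl, fun j hj => hwk j (by omega)⟩ :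
          f m ∈ ballC G x m) ?_
        exact Set.mem_insert_iff.2 (Or.inr (by rw [← hfk]; exact hwk m (by omega)))
    have hfin : (ballC G x m).Finite := by
      rw [← Set.encard_lt_top_iff]
      exact lt_of_le_of_lt ih (by exact_mod_cast WithTop.coe_lt_top _)
    have hb : ∀ y : X, (insert y {z | (y, z) ∈ G}).encard ≤ ((d : ℕ∞) + 1) := fun y =>
      (Set.encard_insert_le _ _).trans (add_le_add_left (hdeg y) 1)
    calc (ballC G x (m + 1)).encard
        ≤ (⋃ y ∈ ballC G x m, insert y {z | (y, z) ∈ G}).encard := Set.encard_le_encard hsub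
      _ ≤ (ballC G x m).encard * ((d : ℕ∞) + 1) := encard_biUnion_le hfin _ hb
      _ ≤ (((d + 1) ^ (m + 1) : ℕ) : ℕ∞) * ((d : ℕ∞) + 1) :=
          mul_le_mul_left ih _
      _ = (((d + 1) ^ (m + 2) : ℕ) : ℕ∞) := by
          push_cast
          ring
  
lemma ballC_finite {d : ℕ} (hdeg : ∀ x : X, {y | (x, y) ∈ G}.encard ≤ (d : ℕ∞)) (x : X)
    (m : ℕ) : (ballC G x m).Finite := by
  rw [← Set.encard_lt_top_iff]
  exact lt_of_le_of_lt (ballC_encard hdeg x m) (by exact_mod_cast WithTop.coe_lt_top _)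

/-- Extraction of a bounded-length walk from a `gdiam` bound. -/
lemma walk_of_gdiam_le {A : Set X} {r : ℕ} (h : gdiam G A ≤ (r : ℕ∞)) {x y : X}
    (hx : x ∈ A) (hy : y ∈ A) : ∃ k ≤ r, WalkN G x y k := by
  have h1 : graphDist G x y ≤ (r : ℕ∞) := by
    refine le_trans ?_ h
    have h2 : graphDist G x y ≤ ⨆ y' ∈ A, graphDist G x y' := le_biSup _ hy
    exact h2.trans (le_biSup (fun x' => ⨆ y' ∈ A, graphDist G x' y') hx)
  have h2 : graphDist G x y < ((r : ℕ∞) + 1) := lt_of_le_of_lt h1 (by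
    rw [← Nat.cast_one, ← Nat.cast_add]
    exact_mod_cast Nat.lt_succ_self r)
  rw [graphDist, sInf_lt_iff] at h2
  obtain ⟨a, ⟨n, f, rfl, hf0, hfn, hw⟩, hlt⟩ := h2
  have hn : n ≤ r := by
    have : ((n : ℕ∞)) < ((r + 1 : ℕ) : ℕ∞) := by exact_mod_cast hlt
    exact_mod_cast Nat.lt_succ_iff.mp (by exact_mod_cast this)
  exact ⟨n, hn, f, hf0, hfn, hw⟩

end CutsetAux
namespace CutsetAux

variable {X : Type*} {G : Set (X × X)}

/-- A convenient repackaging of `IsCut`. -/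
def NiceCut (G : Set (X × X)) (ω C : Set X) : Prop :=
  IsClass G ω ∧ C ⊆ ω ∧ C.Nonempty ∧ (ω \ C).Nonempty

lemma isCut_niceCut {C : Set X} (h : IsCut G C) : ∃ ω, NiceCut G ω C := by
  obtain ⟨⟨x₀, hx₀, hsub, hne⟩, -⟩ := h
  refine ⟨cls G x₀, ⟨x₀, rfl⟩, hsub, ⟨x₀, hx₀⟩, ?_⟩
  rw [Set.diff_nonempty]
  exact fun h => hne (Set.Subset.antisymm hsub h)

lemma NiceCut.cCompl_eq (hsym : ∀ p ∈ G, (p.2, p.1) ∈ G) {ω C : Set X}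
    (h : NiceCut G ω C) : cCompl G C = ω \ C := by
  obtain ⟨hω, hsub, ⟨x₀, hx₀⟩, hne⟩ := h
  ext y
  constructor
  · rintro ⟨hy, x, hx, hr⟩
    exact ⟨class_closed hω (hsub hx) hr, hy⟩
  · rintro ⟨hy, hy'⟩
    exact ⟨hy', x₀, hx₀, class_conn hsym hω (hsub hx₀) hy⟩

lemma NiceCut.compl (hω : IsClass G ω) {C : Set X} (h : NiceCut G ω C) :
    NiceCut G ω (ω \ C) := by
  obtain ⟨-, hsub, hne, hne'⟩ := h
  refine ⟨hω, Set.diff_subset, hne', ?_⟩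
  obtain ⟨x, hx⟩ := hne
  exact ⟨x, hsub hx, fun h => h.2 hx⟩

lemma diff_diff_eq {ω C : Set X} (hsub : C ⊆ ω) : ω \ (ω \ C) = C :=
  Set.diff_diff_cancel_left hsub

/-- The inner boundary of a nice cut is nonempty. -/
lemma NiceCut.innerB_nonempty (hsym : ∀ p ∈ G, (p.2, p.1) ∈ G) {ω C : Set X}
    (h : NiceCut G ω C) : (innerB G C).Nonempty := by
  obtain ⟨hω, hsub, ⟨x, hx⟩, ⟨y, hy⟩⟩ := h
  obtain ⟨n, f, hf0, hfn, hw⟩ := class_conn hsym hω (hsub hx) hy.1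
  have : f n ∉ C := by rw [hfn]; exact hy.2
  obtain ⟨i, hi, h1, h2⟩ := exists_cross hw (hf0 ▸ hx) this
  exact ⟨f i, h1, f (i + 1), h2, hw i hi⟩

lemma innerB_subset {C : Set X} : innerB G C ⊆ C := fun _ h => h.1

/-- Points of the outer boundary are adjacent to the inner boundary. -/
lemma outerB_adj (hsym : ∀ p ∈ G, (p.2, p.1) ∈ G) {C : Set X} {y : X}
    (hy : y ∈ outerB G C) : ∃ x ∈ innerB G C, (x, y) ∈ G := by
  obtain ⟨hy1, x, hx, hxy⟩ := hy
  exact ⟨x, ⟨hx, y, hy1, hsym _ hxy⟩, hsym _ hxy⟩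

/-- Given a `gdiam` bound `r` on the inner boundary, the whole inner boundary lies in the
ball of radius `R` around a point `p` that is within `R - r` of some boundary point. -/
lemma innerB_subset_ballC {C : Set X} {r : ℕ} (hr : gdiam G (innerB G C) ≤ (r : ℕ∞))
    {p q : X} {m : ℕ} (hq : q ∈ innerB G C) (hpq : p ∈ ballC G q m) :
    innerB G C ⊆ ballC G q (m + r) ∧ ∀ q' ∈ innerB G C, p ∈ ballC G q' (m + r) := by
  constructor
  · intro q' hq'
    obtain ⟨k, hk, hwk⟩ := walk_of_gdiam_le hr hq hq'
    exact mem_ballC_of_walk (by omega) hwk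
  · intro q' hq'
    obtain ⟨k, hk, hwk⟩ := walk_of_gdiam_le hr hq' hq
    obtain ⟨k', hk', hwk'⟩ := hpq
    exact mem_ballC_of_walk (by omega) (hwk.trans hwk')

/-- Trace injectivity: a nice cut whose boundaries lie inside `T` is determined by its
trace on `T`. -/
lemma cut_eq_of_trace_eq (hsym : ∀ p ∈ G, (p.2, p.1) ∈ G) {T C D ωC ωD : Set X}
    (hC : NiceCut G ωC C) (hD : NiceCut G ωD D)
    (hCin : innerB G C ⊆ T) (hCout : outerB G C ⊆ T)
    (hDin : innerB G D ⊆ T) (hDout : outerB G D ⊆ T)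
    (htr : C ∩ T = D ∩ T) : C = D := by
  obtain ⟨t, ht⟩ := hC.innerB_nonempty hsym
  have htC : t ∈ C := ht.1
  have htT : t ∈ T := hCin ht
  have htD : t ∈ D := by
    have : t ∈ D ∩ T := htr ▸ (⟨htC, htT⟩ : t ∈ C ∩ T)
    exact this.1
  have hωC : ωC = cls G t := (cls_eq_of_mem hsym hC.1 (hC.2.1 htC)).symm
  have hωD : ωD = cls G t := (cls_eq_of_mem hsym hD.1 (hD.2.1 htD)).symm
  have hkey : ∀ v ∈ cls G t, (v ∈ C ↔ v ∈ D) := by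
    intro v hv
    obtain ⟨n, f, hf0, hfn, hw⟩ := reach_symm hsym hv
    have hfnT : f n ∈ T := by rw [hfn]; exact htT
    obtain ⟨i, hi, hiT, hmin⟩ := exists_firstHit f n hfnT
    have h1 := mem_iff_of_walk_avoid hCin hCout hw hi hmin
    have h2 := mem_iff_of_walk_avoid hDin hDout hw hi hmin
    rw [hf0] at h1 h2
    have h3 : f i ∈ C ↔ f i ∈ D := by
      have h4 := Set.ext_iff.mp htr (f i)
      simp only [Set.mem_inter_iff] at h4
      tauto
    rw [h1, h2, h3]
  ext v
  by_cases hv : v ∈ cls G t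
  · exact hkey v hv
  · constructor
    · intro h; exact absurd (hωC ▸ hC.2.1 h) hv
    · intro h; exact absurd (hωD ▸ hD.2.1 h) hv

/-- There are at most `2 ^ (d+1)^(R+2)` nice cuts with inner boundary inside a ball of
radius `R`, and in particular finitely many. -/
lemma cuts_in_ball_encard (hsym : ∀ p ∈ G, (p.2, p.1) ∈ G) {d : ℕ}
    (hdeg : ∀ x : X, {y | (x, y) ∈ G}.encard ≤ (d : ℕ∞)) (p : X) (R : ℕ) :
    {C : Set X | (∃ ω, NiceCut G ω C) ∧ innerB G C ⊆ ballC G p R}.encard ≤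
      ((2 ^ ((d + 1) ^ (R + 3)) : ℕ) : ℕ∞) := by
  classical
  set T : Set X := ballC G p (R + 1) with hT
  have hTfin : T.Finite := ballC_finite hdeg p (R + 1)
  have houtT : ∀ C : Set X, innerB G C ⊆ ballC G p R → outerB G C ⊆ T := by
    intro C hC y hy
    obtain ⟨x, hx, hxy⟩ := outerB_adj hsym hy
    exact ballC_step (hC hx) hxy
  have hinT : ∀ C : Set X, innerB G C ⊆ ballC G p R → innerB G C ⊆ T := by
    intro C hC
    exact hC.trans (ballC_mono (by omega))
  have hinj : Set.InjOn (· ∩ T)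
      {C : Set X | (∃ ω, NiceCut G ω C) ∧ innerB G C ⊆ ballC G p R} := by
    rintro C ⟨⟨ωC, hC⟩, hCb⟩ D ⟨⟨ωD, hD⟩, hDb⟩ htr
    exact cut_eq_of_trace_eq hsym hC hD (hinT C hCb) (houtT C hCb) (hinT D hDb)
      (houtT D hDb) htr
  set t : Finset X := hTfin.toFinset with hts
  have hmap : Set.MapsTo (fun s : Set X => t.filter (· ∈ s))
      ((· ∩ T) '' {C : Set X | (∃ ω, NiceCut G ω C) ∧ innerB G C ⊆ ballC G p R})
      ↑t.powerset := by
    intro s _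
    simp only [Finset.mem_coe, Finset.mem_powerset]
    exact Finset.filter_subset _ t
  have hinj2 : Set.InjOn (fun s : Set X => t.filter (· ∈ s))
      ((· ∩ T) '' {C : Set X | (∃ ω, NiceCut G ω C) ∧ innerB G C ⊆ ballC G p R}) := by
    rintro s1 ⟨C1, -, rfl⟩ s2 ⟨C2, -, rfl⟩ heq
    show C1 ∩ T = C2 ∩ T
    ext v
    have h := Finset.ext_iff.mp heq v
    simp only [Finset.mem_filter, hts, hTfin.mem_toFinset, Set.mem_inter_iff] at h
    constructor
    · rintro ⟨h1, h2⟩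
      exact ⟨(h.mp ⟨h2, h1, h2⟩).2.1, h2⟩
    · rintro ⟨h1, h2⟩
      exact ⟨(h.mpr ⟨h2, h1, h2⟩).2.1, h2⟩
  calc {C : Set X | (∃ ω, NiceCut G ω C) ∧ innerB G C ⊆ ballC G p R}.encard
      = ((· ∩ T) '' {C : Set X | (∃ ω, NiceCut G ω C) ∧ innerB G C ⊆ ballC G p R}).encard :=
        (Set.InjOn.encard_image hinj).symm
    _ ≤ (↑t.powerset : Set (Finset X)).encard :=
        Set.encard_le_encard_of_injOn hmap hinj2
    _ = (t.powerset.card : ℕ∞) := Set.encard_coe_eq_coe_finsetCard _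
    _ = ((2 ^ t.card : ℕ) : ℕ∞) := by rw [Finset.card_powerset]
    _ ≤ ((2 ^ ((d + 1) ^ (R + 3)) : ℕ) : ℕ∞) := by
        rw [Nat.cast_le]
        refine Nat.pow_le_pow_right (by omega) ?_
        have h1 : (T.encard) ≤ (((d + 1) ^ (R + 2) : ℕ) : ℕ∞) := ballC_encard hdeg p (R + 1)
        have h2 : T.encard = (t.card : ℕ∞) := by
          rw [hts, Set.Finite.encard_eq_coe_toFinset_card hTfin]
        rw [h2, Nat.cast_le] at h1
        exact h1.trans (Nat.pow_le_pow_right (by omega) (by omega))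

lemma cuts_in_ball_finite (hsym : ∀ p ∈ G, (p.2, p.1) ∈ G) {d : ℕ}
    (hdeg : ∀ x : X, {y | (x, y) ∈ G}.encard ≤ (d : ℕ∞)) (p : X) (R : ℕ) :
    {C : Set X | (∃ ω, NiceCut G ω C) ∧ innerB G C ⊆ ballC G p R}.Finite := by
  rw [← Set.encard_lt_top_iff]
  exact lt_of_le_of_lt (cuts_in_ball_encard hsym hdeg p R)
    (by exact_mod_cast WithTop.coe_lt_top _)

end CutsetAux
namespace CutsetAux

variable {X : Type*} {G : Set (X × X)}

/-- The full vertex boundary of `C` inside the class `ω`. -/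
def bigB (G : Set (X × X)) (ω C : Set X) : Set X := innerB G C ∪ innerB G (ω \ C)

lemma bigB_compl {ω C : Set X} (hsub : C ⊆ ω) : bigB G ω (ω \ C) = bigB G ω C := by
  rw [bigB, bigB, diff_diff_eq hsub, Set.union_comm]

lemma bigB_subset_class {ω C : Set X} (hsub : C ⊆ ω) : bigB G ω C ⊆ ω := by
  rintro x (hx | hx)
  · exact hsub hx.1
  · exact hx.1.1

lemma innerB_subset_bigB {ω C : Set X} : innerB G C ⊆ bigB G ω C := Set.subset_union_left

/-- Every point of `∂iv (ω \ C)` is adjacent to a point of `∂iv C`. -/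
lemma step_to_innerB (hsym : ∀ p ∈ G, (p.2, p.1) ∈ G) {ω C : Set X} (hω : IsClass G ω)
    {b : X} (hb : b ∈ innerB G (ω \ C)) : ∃ y ∈ innerB G C, (y, b) ∈ G := by
  obtain ⟨⟨hbω, hbC⟩, y, hy, hby⟩ := hb
  have hyω : y ∈ ω := class_closed_edge hω hbω hby
  have hyC : y ∈ C := by
    by_contra h
    exact hy ⟨hyω, h⟩
  exact ⟨y, ⟨hyC, b, hbC, hsym _ hby⟩, hsym _ hby⟩

/-- Any point of the full boundary is within one step of the inner boundary. -/
lemma bigB_to_innerB (hsym : ∀ p ∈ G, (p.2, p.1) ∈ G) {ω C : Set X} (hω : IsClass G ω)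
    {a : X} (ha : a ∈ bigB G ω C) :
    ∃ y ∈ innerB G C, ∃ j ≤ 1, WalkN G a y j ∧ WalkN G y a j := by
  rcases ha with ha | ha
  · exact ⟨a, ha, 0, Nat.zero_le 1, walkN_refl a, walkN_refl a⟩
  · obtain ⟨y, hy, hyb⟩ := step_to_innerB hsym hω ha
    have h1 : WalkN G y a 1 :=
      ⟨fun i => if i = 0 then y else a, by simp, by simp, by
        intro i hi; interval_cases i; simpa⟩
    exact ⟨y, hy, 1, le_rfl, h1.symm hsym, h1⟩

/-- Any two points of the full boundary are joined by a short walk. -/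
lemma bigB_walk (hsym : ∀ p ∈ G, (p.2, p.1) ∈ G) {ω C : Set X} {r : ℕ}
    (hω : IsClass G ω) (hrC : gdiam G (innerB G C) ≤ (r : ℕ∞))
    {a b : X} (ha : a ∈ bigB G ω C) (hb : b ∈ bigB G ω C) :
    ∃ k ≤ r + 2, WalkN G a b k := by
  obtain ⟨ya, hya, ja, hja, hwa, -⟩ := bigB_to_innerB hsym hω ha
  obtain ⟨yb, hyb, jb, hjb, -, hwb⟩ := bigB_to_innerB hsym hω hb
  obtain ⟨k, hk, hwk⟩ := walk_of_gdiam_le hrC hya hyb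
  exact ⟨ja + k + jb, by omega, (hwa.trans hwk).trans hwb⟩

/-- If the full boundary of `C` meets both sides of `D`, the boundaries of `C` and `D`
are close. -/
lemma cross_half (hsym : ∀ p ∈ G, (p.2, p.1) ∈ G) {ω C D : Set X} {r : ℕ}
    (hω : IsClass G ω) (hrC : gdiam G (innerB G C) ≤ (r : ℕ∞))
    {a b : X} (ha : a ∈ bigB G ω C ∩ D) (hb : b ∈ bigB G ω C ∩ (ω \ D)) :
    ∃ p ∈ innerB G C, ∃ q ∈ innerB G D, ∃ k ≤ r + 3, WalkN G p q k := by
  obtain ⟨k, hk, f, hf0, hfk, hw⟩ := bigB_walk hsym hω hrC ha.1 hb.1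
  have h0 : f 0 ∈ D := hf0 ▸ ha.2
  have hkD : f k ∉ D := by rw [hfk]; exact hb.2.2
  obtain ⟨i, hi, h1, h2⟩ := exists_cross hw h0 hkD
  have hq : f i ∈ innerB G D := ⟨h1, f (i + 1), h2, hw i hi⟩
  have hwalk : WalkN G a (f i) i := ⟨f, hf0, rfl, fun j hj => hw j (by omega)⟩
  obtain ⟨ya, hya, ja, hja, -, hwa⟩ := bigB_to_innerB hsym hω ha.1
  exact ⟨ya, hya, f i, hq, ja + i, by omega, hwa.trans hwalk⟩

/-- The impossible configuration: all of `∂C` hidden inside `D` and `∂D` inside `C`. -/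
lemma no_hidden_corner (hsym : ∀ p ∈ G, (p.2, p.1) ∈ G) {ω C D : Set X}
    (hω : IsClass G ω) (hCsub : C ⊆ ω)
    (hBC : bigB G ω C ⊆ D) (hBD : innerB G D ⊆ C)
    (hw : (C ∩ D).Nonempty) (hz : ((ω \ C) ∩ (ω \ D)).Nonempty) : False := by
  obtain ⟨w, hwC, hwD⟩ := hw
  obtain ⟨z, hz⟩ := hz
  obtain ⟨n, f, hf0, hfn, hwalk⟩ := class_conn hsym hω hz.1.1 (hCsub hwC)
  have key : ∀ i, i ≤ n → f i ∈ (ω \ C) ∩ (ω \ D) := by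
    intro i
    induction i with
    | zero => intro _; rw [hf0]; exact hz
    | succ i ih =>
      intro hi
      have hfi := ih (by omega)
      have hedge := hwalk i (by omega)
      have hfi1ω : f (i + 1) ∈ ω := class_closed_edge hω hfi.1.1 hedge
      have hfC : f (i + 1) ∉ C := by
        intro hc
        have hmem : f i ∈ innerB G (ω \ C) :=
          ⟨hfi.1, f (i + 1), fun hmem => hmem.2 hc, hedge⟩
        exact hfi.2.2 (hBC (Or.inr hmem))
      have hfD : f (i + 1) ∉ D := by
        intro hd
        have hmem : f (i + 1) ∈ innerB G D := ⟨hd, f i, hfi.2.2, hsym _ hedge⟩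
        exact hfC (hBD hmem)
      exact ⟨⟨hfi1ω, hfC⟩, hfi1ω, hfD⟩
  have hlast := key n le_rfl
  rw [hfn] at hlast
  exact hlast.1.2 hwC

/-- **Crossing lemma**: if two cuts on the same class cross, their inner boundaries are
joined by a short walk. -/
lemma cross_boundary_close (hsym : ∀ p ∈ G, (p.2, p.1) ∈ G) {ω C D : Set X} {r : ℕ}
    (hω : IsClass G ω) (hC : NiceCut G ω C) (hD : NiceCut G ω D)
    (hrC : gdiam G (innerB G C) ≤ (r : ℕ∞)) (hrD : gdiam G (innerB G D) ≤ (r : ℕ∞))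
    (h1 : (C ∩ D).Nonempty) (h2 : (C ∩ (ω \ D)).Nonempty)
    (h3 : ((ω \ C) ∩ D).Nonempty) (h4 : ((ω \ C) ∩ (ω \ D)).Nonempty) :
    ∃ p ∈ innerB G C, ∃ q ∈ innerB G D, ∃ k ≤ r + 3, WalkN G p q k := by
  by_cases hBC : (bigB G ω C ∩ D).Nonempty ∧ (bigB G ω C ∩ (ω \ D)).Nonempty
  · obtain ⟨⟨a, ha⟩, ⟨b, hb⟩⟩ := hBC
    exact cross_half hsym hω hrC ha hb
  · by_cases hBD : (bigB G ω D ∩ C).Nonempty ∧ (bigB G ω D ∩ (ω \ C)).Nonempty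
    · obtain ⟨⟨a, ha⟩, ⟨b, hb⟩⟩ := hBD
      obtain ⟨q, hq, p, hp, k, hk, hw⟩ := cross_half hsym hω hrD ha hb
      exact ⟨p, hp, q, hq, k, hk, hw.symm hsym⟩
    · exfalso
      have hone : ∀ E F : Set X, E ⊆ ω → ¬((E ∩ F).Nonempty ∧ (E ∩ (ω \ F)).Nonempty) →
          E ⊆ F ∨ E ⊆ ω \ F := by
        intro E F hEω hn
        rcases not_and_or.mp hn with hn | hn
        · right
          rw [Set.not_nonempty_iff_eq_empty] at hn
          exact fun x hx => ⟨hEω hx, fun hxF =>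
            Set.eq_empty_iff_forall_notMem.mp hn x ⟨hx, hxF⟩⟩
        · left
          rw [Set.not_nonempty_iff_eq_empty] at hn
          intro x hx
          by_contra hxF
          exact Set.eq_empty_iff_forall_notMem.mp hn x ⟨hx, hEω hx, hxF⟩
      have hBC' := hone _ D (bigB_subset_class hC.2.1) hBC
      have hBD' := hone _ C (bigB_subset_class hD.2.1) hBD
      have hCc := diff_diff_eq hC.2.1
      have hDc := diff_diff_eq hD.2.1
      rcases hBC' with hbc | hbc <;> rcases hBD' with hbd | hbd
      · exact no_hidden_corner hsym hω hC.2.1 hbc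
          (innerB_subset_bigB.trans hbd) h1 h4
      · refine no_hidden_corner hsym hω (Set.diff_subset : ω \ C ⊆ ω)
          ((bigB_compl hC.2.1).symm ▸ hbc : bigB G ω (ω \ C) ⊆ D)
          (innerB_subset_bigB.trans hbd) h3 ?_
        rw [hCc]
        exact h2
      · refine no_hidden_corner hsym hω hC.2.1
          (hbc : bigB G ω C ⊆ ω \ D) ?_ h2 ?_
        · refine Set.Subset.trans ?_ hbd
          rw [← bigB_compl hD.2.1]
          exact innerB_subset_bigB
        · rw [hDc]
          exact h3
      · refine no_hidden_corner hsym hω (Set.diff_subset : ω \ C ⊆ ω)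
          ((bigB_compl hC.2.1).symm ▸ hbc : bigB G ω (ω \ C) ⊆ ω \ D) ?_ h4 ?_
        · refine Set.Subset.trans ?_ hbd
          rw [← bigB_compl hD.2.1]
          exact innerB_subset_bigB
        · rw [hCc, hDc]
          exact h1

end CutsetAux
namespace CutsetAux

variable {X : Type*} {G : Set (X × X)}

/-- Two cuts *cross* if they are on the same class but not nested. -/
def Cross (G : Set (X × X)) (C D : Set X) : Prop :=
  SameClass G C D ∧ ¬ NestedPair G C D

lemma nestedPair_symm {C D : Set X} (h : NestedPair G C D) : NestedPair G D C := by
  rcases h with h | h | h | h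
  · exact Or.inl (by rw [Set.inter_comm]; exact h)
  · exact Or.inr (Or.inr (Or.inl (by rw [Set.inter_comm]; exact h)))
  · exact Or.inr (Or.inl (by rw [Set.inter_comm]; exact h))
  · exact Or.inr (Or.inr (Or.inr (by rw [Set.inter_comm]; exact h)))

lemma sameClass_symm (hsym : ∀ p ∈ G, (p.2, p.1) ∈ G) {C D : Set X}
    (h : SameClass G C D) : SameClass G D C := by
  obtain ⟨x, hx, y, hy, hr⟩ := h
  exact ⟨y, hy, x, hx, reach_symm hsym hr⟩

lemma cross_symm (hsym : ∀ p ∈ G, (p.2, p.1) ∈ G) {C D : Set X} (h : Cross G C D) :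
    Cross G D C :=
  ⟨sameClass_symm hsym h.1, fun hn => h.2 (nestedPair_symm hn)⟩

section Cutset

variable {𝒞 : Set (Set X)} {r d : ℕ}

/-- Any cut in `𝒞` is a nice cut on some class. -/
lemma cut_nice (hcut : ∀ C ∈ 𝒞, IsCut G C) {C : Set X} (hC : C ∈ 𝒞) :
    ∃ ω, NiceCut G ω C := isCut_niceCut (hcut C hC)

/-- Cuts crossing a fixed cut `C` have boundary in a uniformly bounded ball around a
boundary point of `C`. -/
lemma cross_bounded (hsym : ∀ p ∈ G, (p.2, p.1) ∈ G)
    (hcut : ∀ C ∈ 𝒞, IsCut G C) (hbdd : ∀ C ∈ 𝒞, gdiam G (innerB G C) ≤ (r : ℕ∞))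
    {C : Set X} (hC : C ∈ 𝒞) {p₀ : X} (hp₀ : p₀ ∈ innerB G C)
    {D : Set X} (hD : D ∈ 𝒞) (hcr : Cross G C D) :
    innerB G D ⊆ ballC G p₀ (3 * r + 3) := by
  obtain ⟨ωC, hCn⟩ := cut_nice hcut hC
  obtain ⟨ωD, hDn⟩ := cut_nice hcut hD
  obtain ⟨⟨x, hx, y, hy, hr⟩, hnn⟩ := hcr
  have hωeq : ωD = ωC := by
    rw [← cls_eq_of_mem hsym hDn.1 (hDn.2.1 hy), ← cls_eq_of_mem hsym hCn.1 (hCn.2.1 hx)]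
    exact (cls_eq_of_reach hsym hr).symm
  subst hωeq
  have hCc := hCn.cCompl_eq hsym
  have hDc := hDn.cCompl_eq hsym
  rw [NestedPair, hCc, hDc] at hnn
  push_neg at hnn
  obtain ⟨h1, h2, h3, h4⟩ := hnn
  obtain ⟨p, hp, q, hq, k, hk, hw⟩ := cross_boundary_close hsym hDn.1 hCn hDn
    (hbdd C hC) (hbdd D hD) h1 h2 h3 h4
  intro q' hq'
  obtain ⟨k1, hk1, hw1⟩ := walk_of_gdiam_le (hbdd C hC) hp₀ hp
  obtain ⟨k2, hk2, hw2⟩ := walk_of_gdiam_le (hbdd D hD) hq hq'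
  exact mem_ballC_of_walk (m := 3 * r + 3) (by omega) ((hw1.trans hw).trans hw2)

/-- Uniform bound on the number of cuts of `𝒞` crossing a fixed cut. -/
lemma cross_encard (hsym : ∀ p ∈ G, (p.2, p.1) ∈ G)
    (hdeg : ∀ x : X, {y | (x, y) ∈ G}.encard ≤ (d : ℕ∞))
    (hcut : ∀ C ∈ 𝒞, IsCut G C) (hbdd : ∀ C ∈ 𝒞, gdiam G (innerB G C) ≤ (r : ℕ∞))
    {C : Set X} (hC : C ∈ 𝒞) :
    {D | D ∈ 𝒞 ∧ Cross G C D}.encard ≤ ((2 ^ ((d + 1) ^ (3 * r + 6)) : ℕ) : ℕ∞) := by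
  obtain ⟨ωC, hCn⟩ := cut_nice hcut hC
  obtain ⟨p₀, hp₀⟩ := hCn.innerB_nonempty hsym
  have hsub : {D | D ∈ 𝒞 ∧ Cross G C D} ⊆
      {D : Set X | (∃ ω, NiceCut G ω D) ∧ innerB G D ⊆ ballC G p₀ (3 * r + 3)} := by
    rintro D ⟨hD, hcr⟩
    exact ⟨cut_nice hcut hD, cross_bounded hsym hcut hbdd hC hp₀ hD hcr⟩
  calc {D | D ∈ 𝒞 ∧ Cross G C D}.encard
      ≤ {D : Set X | (∃ ω, NiceCut G ω D) ∧ innerB G D ⊆ ballC G p₀ (3 * r + 3)}.encard :=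
        Set.encard_le_encard hsub
    _ ≤ ((2 ^ ((d + 1) ^ (3 * r + 3 + 3)) : ℕ) : ℕ∞) := cuts_in_ball_encard hsym hdeg _ _

/-- Only finitely many cuts of `𝒞` separate two fixed points of the same class. -/
lemma sep_finite (hsym : ∀ p ∈ G, (p.2, p.1) ∈ G)
    (hdeg : ∀ x : X, {y | (x, y) ∈ G}.encard ≤ (d : ℕ∞))
    (hcut : ∀ C ∈ 𝒞, IsCut G C) (hbdd : ∀ C ∈ 𝒞, gdiam G (innerB G C) ≤ (r : ℕ∞))
    {x y : X} (hr : Reach G x y) : {C | C ∈ 𝒞 ∧ x ∈ C ∧ y ∉ C}.Finite := by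
  obtain ⟨n, f, hf0, hfn, hw⟩ := hr
  have hsub : {C | C ∈ 𝒞 ∧ x ∈ C ∧ y ∉ C} ⊆
      {C : Set X | (∃ ω, NiceCut G ω C) ∧ innerB G C ⊆ ballC G x (n + r)} := by
    rintro C ⟨hC, hxC, hyC⟩
    refine ⟨cut_nice hcut hC, ?_⟩
    have h0 : f 0 ∈ C := hf0 ▸ hxC
    have hnC : f n ∉ C := hfn ▸ hyC
    obtain ⟨i, hi, h1, h2⟩ := exists_cross hw h0 hnC
    have hbd : f i ∈ innerB G C := ⟨h1, f (i + 1), h2, hw i hi⟩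
    intro q hq
    obtain ⟨k, hk, hwk⟩ := walk_of_gdiam_le (hbdd C hC) hbd hq
    have hwi : WalkN G x (f i) i := ⟨f, hf0, rfl, fun j hj => hw j (by omega)⟩
    exact mem_ballC_of_walk (by omega) (hwi.trans hwk)
  exact (cuts_in_ball_finite hsym hdeg x (n + r)).subset hsub

end Cutset

end CutsetAux
namespace CutsetAux

variable {X : Type*} {G : Set (X × X)}

lemma inter_cCompl_eq_empty (C : Set X) : C ∩ cCompl G C = ∅ := by
  ext y
  simp only [Set.mem_inter_iff, Set.mem_empty_iff_false, iff_false, not_and]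
  rintro hy ⟨hy', -⟩
  exact hy' hy

lemma cCompl_inter_eq_empty (C : Set X) : cCompl G C ∩ C = ∅ := by
  rw [Set.inter_comm]; exact inter_cCompl_eq_empty C

lemma NiceCut.ccompl_ccompl (hsym : ∀ p ∈ G, (p.2, p.1) ∈ G) {ω C : Set X}
    (h : NiceCut G ω C) : cCompl G (cCompl G C) = C := by
  rw [h.cCompl_eq hsym, (h.compl h.1).cCompl_eq hsym, diff_diff_eq h.2.1]

/-- A proper, complement-closed partial colouring of `𝒞` with colours `< K`. -/
def GoodColoring (G : Set (X × X)) (𝒞 : Set (Set X)) (K : ℕ)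
    (M : Set (Set X × ℕ)) : Prop :=
  (∀ p ∈ M, p.1 ∈ 𝒞 ∧ p.2 < K) ∧
  (∀ p ∈ M, ∀ q ∈ M, p.1 = q.1 → p.2 = q.2) ∧
  (∀ p ∈ M, (cCompl G p.1, p.2) ∈ M) ∧
  (∀ p ∈ M, ∀ q ∈ M, p.2 = q.2 → ¬ Cross G p.1 q.1)

lemma exists_total_coloring (hsym : ∀ p ∈ G, (p.2, p.1) ∈ G) {𝒞 : Set (Set X)} {N : ℕ}
    (hcut : ∀ C ∈ 𝒞, IsCut G C) (hcompl : ∀ C ∈ 𝒞, cCompl G C ∈ 𝒞)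
    (hcross : ∀ C ∈ 𝒞, {D | D ∈ 𝒞 ∧ Cross G C D}.encard ≤ (N : ℕ∞)) :
    ∃ M : Set (Set X × ℕ), GoodColoring G 𝒞 (2 * N + 1) M ∧ ∀ C ∈ 𝒞, ∃ i, (C, i) ∈ M := by
  classical
  set K := 2 * N + 1 with hK
  set S : Set (Set (Set X × ℕ)) := {M | GoodColoring G 𝒞 K M} with hS
  have hzorn : ∃ M, Maximal (· ∈ S) M := by
    apply zorn_subset
    intro c hc hchain
    refine ⟨⋃₀ c, ⟨?_, ?_, ?_, ?_⟩, fun s hs => Set.subset_sUnion_of_mem hs⟩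
    · rintro p ⟨M, hM, hp⟩
      exact (hc hM).1 p hp
    · rintro p ⟨M1, hM1, hp⟩ q ⟨M2, hM2, hq⟩ heq
      rcases hchain.total hM1 hM2 with h | h
      · exact (hc hM2).2.1 p (h hp) q hq heq
      · exact (hc hM1).2.1 p hp q (h hq) heq
    · rintro p ⟨M1, hM1, hp⟩
      exact Set.mem_sUnion.2 ⟨M1, hM1, (hc hM1).2.2.1 p hp⟩
    · rintro p ⟨M1, hM1, hp⟩ q ⟨M2, hM2, hq⟩ heq
      rcases hchain.total hM1 hM2 with h | h
      · exact (hc hM2).2.2.2 p (h hp) q hq heq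
      · exact (hc hM1).2.2.2 p hp q (h hq) heq
  obtain ⟨M, hMS, hMmax⟩ := hzorn
  refine ⟨M, hMS, ?_⟩
  by_contra htot
  push_neg at htot
  obtain ⟨C₀, hC₀, hun⟩ := htot
  obtain ⟨ω, hC₀n⟩ := isCut_niceCut (hcut C₀ hC₀)
  set cc := cCompl G C₀ with hcc
  have hccC : cc ∈ 𝒞 := hcompl C₀ hC₀
  have hcccc : cCompl G cc = C₀ := hC₀n.ccompl_ccompl hsym
  have hccun : ∀ i, (cc, i) ∉ M := by
    intro i hi
    have := hMS.2.2.1 _ hi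
    rw [hcccc] at this
    exact hun i this
  set F : Set ℕ := {i | ∃ D, (D, i) ∈ M ∧ (Cross G C₀ D ∨ Cross G cc D)} with hF
  have hFcard : F.encard ≤ ((2 * N : ℕ) : ℕ∞) := by
    classical
    set A : Set (Set X) :=
      {D | D ∈ 𝒞 ∧ Cross G C₀ D} ∪ {D | D ∈ 𝒞 ∧ Cross G cc D} with hA
    have hAcard : A.encard ≤ ((2 * N : ℕ) : ℕ∞) := by
      calc A.encard ≤ {D | D ∈ 𝒞 ∧ Cross G C₀ D}.encard +
            {D | D ∈ 𝒞 ∧ Cross G cc D}.encard := Set.encard_union_le _ _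
        _ ≤ (N : ℕ∞) + (N : ℕ∞) := add_le_add (hcross C₀ hC₀) (hcross cc hccC)
        _ = ((2 * N : ℕ) : ℕ∞) := by push_cast; ring
    have key : ∀ i, i ∈ F → ∃ D, (D, i) ∈ M ∧ (Cross G C₀ D ∨ Cross G cc D) :=
      fun i hi => hi
    choose ψ hψ1 hψ2 using key
    set φ : ℕ → Set X := fun i => if h : i ∈ F then ψ i h else ∅ with hφ
    have hφval : ∀ i (hi : i ∈ F), φ i = ψ i hi := by
      intro i hi
      simp only [hφ, dif_pos hi]
    have hmaps : Set.MapsTo φ F A := by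
      intro i hi
      rw [hφval i hi]
      rcases hψ2 i hi with h | h
      · exact Or.inl ⟨(hMS.1 _ (hψ1 i hi)).1, h⟩
      · exact Or.inr ⟨(hMS.1 _ (hψ1 i hi)).1, h⟩
    have hinj : Set.InjOn φ F := by
      intro i hi j hj heq
      rw [hφval i hi, hφval j hj] at heq
      have h1 := hψ1 i hi
      have h2 := hψ1 j hj
      rw [heq] at h1
      exact hMS.2.1 (ψ j hj, i) h1 (ψ j hj, j) h2 rfl
    exact (Set.encard_le_encard_of_injOn hmaps hinj).trans hAcard
  have hfree : ∃ i, i < K ∧ i ∉ F := by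
    by_contra h
    push_neg at h
    have hsub : (↑(Finset.range K) : Set ℕ) ⊆ F := by
      intro i hi
      simp only [Finset.coe_range, Set.mem_Iio] at hi
      exact h i hi
    have h1 : ((K : ℕ) : ℕ∞) ≤ ((2 * N : ℕ) : ℕ∞) := by
      calc ((K : ℕ) : ℕ∞) = (↑(Finset.range K) : Set ℕ).encard := by
            rw [Set.encard_coe_eq_coe_finsetCard, Finset.card_range]
        _ ≤ F.encard := Set.encard_le_encard hsub
        _ ≤ _ := hFcard
    rw [Nat.cast_le] at h1
    omega
  obtain ⟨i0, hi0K, hi0F⟩ := hfree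
  set M' : Set (Set X × ℕ) := insert (C₀, i0) (insert (cc, i0) M) with hM'
  have hnotcross : ∀ A B : Set X, (A = C₀ ∨ A = cc) → (B = C₀ ∨ B = cc) →
      ¬ Cross G A B := by
    rintro A B (rfl | rfl) (rfl | rfl) ⟨-, hnp⟩
    · exact hnp (Or.inr (Or.inl (inter_cCompl_eq_empty _)))
    · exact hnp (Or.inl (inter_cCompl_eq_empty _))
    · exact hnp (Or.inl (cCompl_inter_eq_empty _))
    · exact hnp (Or.inr (Or.inl (by rw [hcccc]; exact cCompl_inter_eq_empty _)))
  have hMS' : M' ∈ S := by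
    refine ⟨?_, ?_, ?_, ?_⟩
    · rintro p (rfl | rfl | hp)
      · exact ⟨hC₀, hi0K⟩
      · exact ⟨hccC, hi0K⟩
      · exact hMS.1 p hp
    · rintro p (rfl | rfl | hp) q (rfl | rfl | hq) heq
      · rfl
      · rfl
      · exact absurd hq (by
          rw [show q = (C₀, q.2) from Prod.ext_iff.mpr ⟨heq.symm, rfl⟩]
          exact hun q.2)
      · rfl
      · rfl
      · exact absurd hq (by
          rw [show q = (cc, q.2) from Prod.ext_iff.mpr ⟨heq.symm, rfl⟩]
          exact hccun q.2)
      · exact absurd hp (by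
          rw [show p = (C₀, p.2) from Prod.ext_iff.mpr ⟨heq, rfl⟩]
          exact hun p.2)
      · exact absurd hp (by
          rw [show p = (cc, p.2) from Prod.ext_iff.mpr ⟨heq, rfl⟩]
          exact hccun p.2)
      · exact hMS.2.1 p hp q hq heq
    · rintro p (rfl | rfl | hp)
      · exact Or.inr (Or.inl rfl)
      · simp only
        rw [hcccc]
        exact Or.inl rfl
      · exact Or.inr (Or.inr (hMS.2.2.1 p hp))
    · rintro p (rfl | rfl | hp) q (rfl | rfl | hq) heq
      · exact hnotcross _ _ (Or.inl rfl) (Or.inl rfl)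
      · exact hnotcross _ _ (Or.inl rfl) (Or.inr rfl)
      · intro hcr
        refine hi0F ⟨q.1, ?_, Or.inl hcr⟩
        rw [show (q.1, i0) = q from Prod.ext_iff.mpr ⟨rfl, heq⟩]
        exact hq
      · exact hnotcross _ _ (Or.inr rfl) (Or.inl rfl)
      · exact hnotcross _ _ (Or.inr rfl) (Or.inr rfl)
      · intro hcr
        refine hi0F ⟨q.1, ?_, Or.inr hcr⟩
        rw [show (q.1, i0) = q from Prod.ext_iff.mpr ⟨rfl, heq⟩]
        exact hq
      · intro hcr
        refine hi0F ⟨p.1, ?_, Or.inl (cross_symm hsym hcr)⟩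
        rw [show (p.1, i0) = p from Prod.ext_iff.mpr ⟨rfl, heq.symm⟩]
        exact hp
      · intro hcr
        refine hi0F ⟨p.1, ?_, Or.inr (cross_symm hsym hcr)⟩
        rw [show (p.1, i0) = p from Prod.ext_iff.mpr ⟨rfl, heq.symm⟩]
        exact hp
      · exact hMS.2.2.2 p hp q hq heq
  have hsub : M ⊆ M' := (Set.subset_insert _ _).trans (Set.subset_insert _ _)
  have := hMmax hMS' hsub
  exact hun i0 (this (Set.mem_insert _ _))

end CutsetAux

open CutsetAux

/-- A cutset with uniformly bounded boundaries closed under complementation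
decomposes into finitely many cutsets, each nested, closed under complementation, with
uniformly bounded boundaries and finitely separating on each class (i.e. a treeset on each
`E_G`-class). -/
theorem cutset_decomposes_into_treesets {X : Type*} (G : Set (X × X))
    (hG : IsGraph G) (hdeg : BddDeg G)
    (𝒞 : Set (Set X)) (hcut : ∀ C ∈ 𝒞, IsCut G C)
    (r : ℕ) (hbdd : ∀ C ∈ 𝒞, gdiam G (innerB G C) ≤ (r : ℕ∞))
    (hcompl : ∀ C ∈ 𝒞, cCompl G C ∈ 𝒞) :
    ∃ (n : ℕ) (𝒟 : ℕ → Set (Set X)),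
      𝒞 = (⋃ i ∈ Finset.range (n + 1), 𝒟 i) ∧
      ∀ i ≤ n, 𝒟 i ⊆ 𝒞 ∧
        (∀ C ∈ 𝒟 i, ∀ D ∈ 𝒟 i, SameClass G C D → NestedPair G C D) ∧
        (∀ C ∈ 𝒟 i, cCompl G C ∈ 𝒟 i) ∧
        (∃ s : ℕ, ∀ C ∈ 𝒟 i, gdiam G (innerB G C) ≤ (s : ℕ∞)) ∧
        (∀ x y : X, Reach G x y → {C | C ∈ 𝒟 i ∧ x ∈ C ∧ y ∉ C}.Finite) ∧
        (∀ x : X, IsTreesetOn (cls G x) {C | C ∈ 𝒟 i ∧ C ⊆ cls G x}) := by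
  classical
  obtain ⟨hsym, hirr⟩ := hG
  obtain ⟨d, hdeg⟩ := hdeg
  set N : ℕ := 2 ^ ((d + 1) ^ (3 * r + 6)) with hN
  have hcross : ∀ C ∈ 𝒞, {D | D ∈ 𝒞 ∧ Cross G C D}.encard ≤ (N : ℕ∞) :=
    fun C hC => cross_encard hsym hdeg hcut hbdd hC
  obtain ⟨M, hM, htot⟩ := exists_total_coloring hsym hcut hcompl hcross
  refine ⟨2 * N, fun i => {C | (C, i) ∈ M}, ?_, ?_⟩
  · ext C
    simp only [Set.mem_iUnion, Finset.mem_range, Set.mem_setOf_eq]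
    constructor
    · intro hC
      obtain ⟨i, hi⟩ := htot C hC
      exact ⟨i, (hM.1 (C, i) hi).2, hi⟩
    · rintro ⟨i, -, hi⟩
      exact (hM.1 (C, i) hi).1
  · intro i hi
    have hDsub : {C | (C, i) ∈ M} ⊆ 𝒞 := fun C hC => (hM.1 (C, i) hC).1
    have hnest : ∀ C, (C, i) ∈ M → ∀ D, (D, i) ∈ M → SameClass G C D →
        NestedPair G C D := by
      intro C hC D hD hsc
      by_contra hnp
      exact hM.2.2.2 (C, i) hC (D, i) hD rfl ⟨hsc, hnp⟩
    refine ⟨hDsub, fun C hC D hD => hnest C hC D hD, fun C hC => hM.2.2.1 (C, i) hC,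
      ⟨r, fun C hC => hbdd C (hDsub hC)⟩, ?_, ?_⟩
    · intro x y hxy
      exact (sep_finite hsym hdeg hcut hbdd hxy).subset
        (fun C hC => ⟨hDsub hC.1, hC.2⟩)
    · intro x
      have hclassx : IsClass G (cls G x) := ⟨x, rfl⟩
      have key : ∀ C, (C, i) ∈ M → C ⊆ cls G x → NiceCut G (cls G x) C := by
        intro C hC hsub
        obtain ⟨ωC, hCn⟩ := isCut_niceCut (hcut C (hDsub hC))
        obtain ⟨t, ht⟩ := hCn.2.2.1
        have h1 : cls G t = ωC := cls_eq_of_mem hsym hCn.1 (hCn.2.1 ht)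
        have h2 : cls G x = cls G t := cls_eq_of_reach hsym (hsub ht)
        have : ωC = cls G x := by rw [h2, h1]
        exact this ▸ hCn
      refine ⟨?_, ?_, ?_, ?_⟩
      · rintro C ⟨hC, hsub⟩
        refine ⟨hsub, (key C hC hsub).2.2.1, fun he => ?_⟩
        obtain ⟨y, hy1, hy2⟩ := (key C hC hsub).2.2.2
        exact hy2 (he ▸ hy1)
      · rintro C ⟨hC, hCsub⟩ D ⟨hD, hDsub'⟩
        have hnC := key C hC hCsub
        have hnD := key D hD hDsub'
        obtain ⟨tC, htC⟩ := hnC.2.2.1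
        obtain ⟨tD, htD⟩ := hnD.2.2.1
        have hsc : SameClass G C D :=
          ⟨tC, htC, tD, htD, class_conn hsym hclassx (hCsub htC) (hDsub' htD)⟩
        have hnp := hnest C hC D hD hsc
        rw [← hnC.cCompl_eq hsym, ← hnD.cCompl_eq hsym]
        exact hnp
      · rintro C ⟨hC, hsub⟩
        have h1 : (cCompl G C, i) ∈ M := hM.2.2.1 (C, i) hC
        have h2 : cCompl G C = cls G x \ C := (key C hC hsub).cCompl_eq hsym
        rw [← h2]
        exact ⟨h1, h2 ▸ Set.diff_subset⟩
      · intro x' hx' y' hy'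
        have hxy : Reach G x' y' := class_conn hsym hclassx hx' hy'
        exact (sep_finite hsym hdeg hcut hbdd hxy).subset
          (fun C hC => ⟨hDsub hC.1.1, hC.2⟩)
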